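/- Take r = 9 and let H = dE_0 − m_1E_1 − ⋯ − m_9E_9 be an E-standard class in Pic_9 with m_9 ≥ 1, χ(H) ≥ 3, and H·C_9 ≤ 1. Then there is an integer m ≥ 2 with H = mC_9 + E_9, i.e. d = 3m, m_1 = ⋯ = m_8 = m and m_9 = m − 1. -/
import Mathlib


open Finset

/-- The intersection form on `Pic_r = ℤ^{r+1}`: the symmetric bilinear form with
`E_0·E_0 = 1`, `E_i·E_i = -1` for `1 ≤ i ≤ r`, and `E_i·E_j = 0` for `i ≠ j`. -/
def inter {r : ℕ} (x y : Fin (r + 1) → ℤ) : ℤ :=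
  2 * (x 0 * y 0) - ∑ i, x i * y i

/-- The standard basis class `E_i` of `Pic_r`. -/
def Eb (r : ℕ) (i : Fin (r + 1)) : Fin (r + 1) → ℤ :=
  fun j => if j = i then 1 else 0

/-- The canonical class `K = -3E_0 + E_1 + ⋯ + E_r`. -/
def Kc (r : ℕ) : Fin (r + 1) → ℤ :=
  fun j => if j = 0 then -3 else 1

/-- The roots `r_0 = E_0 - E_1 - E_2 - E_3` and `r_i = E_i - E_{i+1}` for `1 ≤ i ≤ r-1`. -/
def root (r : ℕ) (i : Fin r) : Fin (r + 1) → ℤ :=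
  if (i : ℕ) = 0 then Eb r 0 - Eb r 1 - Eb r 2 - Eb r 3
  else Eb r i.castSucc - Eb r i.succ

/-- The reflection `σ_v(x) = x + (x·v) v` in the root `v`. -/
def reflect {r : ℕ} (v x : Fin (r + 1) → ℤ) : Fin (r + 1) → ℤ :=
  x + inter x v • v

/-- Membership in the Weyl group `W_r`: the group of transformations of `Pic_r`
generated by the reflections `σ_i(x) = x + (x·r_i) r_i`, `0 ≤ i ≤ r-1` (since each
generator is an involution, the submonoid generated coincides with the subgroup
generated). -/
def InWeyl (r : ℕ) (f : (Fin (r + 1) → ℤ) → (Fin (r + 1) → ℤ)) : Prop :=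
  f ∈ Submonoid.closure
    { g : Function.End (Fin (r + 1) → ℤ) | ∃ i : Fin r, g = reflect (root r i) }

/-- `H = dE_0 - m_1E_1 - ⋯ - m_rE_r` (so `d = H 0`, `m_i = -H i`) is E-standard:
`d ≥ m_1 ≥ ⋯ ≥ m_r ≥ 0`, `d ≥ m_1 + m_2` and `d ≥ m_1 + m_2 + m_3`. -/
def EStandard (r : ℕ) (H : Fin (r + 1) → ℤ) : Prop :=
  -H 1 ≤ H 0 ∧
  (∀ i j : Fin (r + 1), 1 ≤ (i : ℕ) → i ≤ j → -H j ≤ -H i) ∧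
  0 ≤ -H (Fin.last r) ∧
  -H 1 + -H 2 ≤ H 0 ∧
  -H 1 + -H 2 + -H 3 ≤ H 0

/-- `H = dE_0 - m_1E_1 - ⋯ - m_rE_r` is E-semi-standard: `d ≥ 0`,
`d ≥ m_1 ≥ ⋯ ≥ m_r` and `d ≥ m_1 + m_2 + m_3` (the `m_i` may be negative). -/
def ESemiStandard (r : ℕ) (H : Fin (r + 1) → ℤ) : Prop :=
  0 ≤ H 0 ∧
  -H 1 ≤ H 0 ∧
  (∀ i j : Fin (r + 1), 1 ≤ (i : ℕ) → i ≤ j → -H j ≤ -H i) ∧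
  -H 1 + -H 2 + -H 3 ≤ H 0

/-- A class is standard if its image under some element of `W_r` is E-standard. -/
def Standard (r : ℕ) (H : Fin (r + 1) → ℤ) : Prop :=
  ∃ f, InWeyl r f ∧ EStandard r (f H)

/-- A class is semi-standard if its image under some element of `W_r` is
E-semi-standard. -/
def SemiStandard (r : ℕ) (H : Fin (r + 1) → ℤ) : Prop :=
  ∃ f, InWeyl r f ∧ ESemiStandard r (f H)

/-- An exceptional class: an element of the `W_r`-orbit of `E_r`. -/
def Exceptional (r : ℕ) (x : Fin (r + 1) → ℤ) : Prop :=
  ∃ f, InWeyl r f ∧ x = f (Eb r (Fin.last r))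

/-- A line class: an element of the `W_r`-orbit of `E_0`. -/
def LineClass (r : ℕ) (x : Fin (r + 1) → ℤ) : Prop :=
  ∃ f, InWeyl r f ∧ x = f (Eb r 0)

/-- A pencil class: an element of the `W_r`-orbit of `E_0 - E_1`. -/
def PencilClass (r : ℕ) (x : Fin (r + 1) → ℤ) : Prop :=
  ∃ f, InWeyl r f ∧ x = f (Eb r 0 - Eb r 1)

/-- The elliptic generating class `C_i = 3E_0 - E_1 - ⋯ - E_i`. -/
def Cc (r : ℕ) (i : Fin (r + 1)) : Fin (r + 1) → ℤ :=
  fun j => if j = 0 then 3 else if j ≤ i then -1 else 0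

/-- The Euler characteristic `χ(H) = 1 + (H·H - H·K)/2`. -/
def chi (r : ℕ) (H : Fin (r + 1) → ℤ) : ℤ :=
  1 + (inter H H - inter H (Kc r)) / 2

/-- Take `r = 9` and let `H = dE_0 − m_1E_1 − ⋯ − m_9E_9` be an E-standard class in
`Pic_9` with `m_9 ≥ 1`, `χ(H) ≥ 3` and `H·C_9 ≤ 1`. Then there is an integer
`m ≥ 2` with `H = mC_9 + E_9`, i.e. `d = 3m`, `m_1 = ⋯ = m_8 = m` and
`m_9 = m − 1` (recall `d = H 0`, `m_i = -H i`). -/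
theorem sum10' (f : Fin 10 → ℤ) :
    ∑ i, f i = f 0 + f 1 + f 2 + f 3 + f 4 + f 5 + f 6 + f 7 + f 8 + f 9 := by
  rw [Fin.sum_univ_castSucc (n := 9), Fin.sum_univ_castSucc (n := 8),
    Fin.sum_univ_castSucc (n := 7), Fin.sum_univ_castSucc (n := 6),
    Fin.sum_univ_castSucc (n := 5), Fin.sum_univ_castSucc (n := 4),
    Fin.sum_univ_castSucc (n := 3), Fin.sum_univ_castSucc (n := 2),
    Fin.sum_univ_castSucc (n := 1), Fin.sum_univ_one]
  rfl

theorem low_degree_on_C9 (H : Fin 10 → ℤ)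
    (hst : EStandard 9 H) (hm9 : 1 ≤ -H 9) (hchi : 3 ≤ chi 9 H)
    (hC9 : inter H (Cc 9 9) ≤ 1) :
    ∃ m : ℤ, 2 ≤ m ∧ H 0 = 3 * m ∧
      (∀ i : Fin 10, 1 ≤ (i : ℕ) → (i : ℕ) ≤ 8 → H i = -m) ∧
      H 9 = -(m - 1) := by
  obtain ⟨h1, hmono, hlast, h12, h123⟩ := hst
  have g12 := hmono 1 2 (by decide) (by decide)
  have g23 := hmono 2 3 (by decide) (by decide)
  have g34 := hmono 3 4 (by decide) (by decide)
  have g45 := hmono 4 5 (by decide) (by decide)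
  have g56 := hmono 5 6 (by decide) (by decide)
  have g67 := hmono 6 7 (by decide) (by decide)
  have g78 := hmono 7 8 (by decide) (by decide)
  have g89 := hmono 8 9 (by decide) (by decide)
  have hC : 3 * H 0 + (H 1 + H 2 + H 3 + H 4 + H 5 + H 6 + H 7 + H 8 + H 9) ≤ 1 := by
    unfold inter Cc at hC9
    rw [sum10'] at hC9
    simp only [show ¬((1:Fin 10) = 0) by decide, show ¬((2:Fin 10) = 0) by decide,
      show ¬((3:Fin 10) = 0) by decide, show ¬((4:Fin 10) = 0) by decide,
      show ¬((5:Fin 10) = 0) by decide, show ¬((6:Fin 10) = 0) by decide,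
      show ¬((7:Fin 10) = 0) by decide, show ¬((8:Fin 10) = 0) by decide,
      show ¬((9:Fin 10) = 0) by decide, show ((1:Fin 10) ≤ 9) by decide,
      show ((2:Fin 10) ≤ 9) by decide, show ((3:Fin 10) ≤ 9) by decide,
      show ((4:Fin 10) ≤ 9) by decide, show ((5:Fin 10) ≤ 9) by decide,
      show ((6:Fin 10) ≤ 9) by decide, show ((7:Fin 10) ≤ 9) by decide,
      show ((8:Fin 10) ≤ 9) by decide, show ((9:Fin 10) ≤ 9) by decide,
      if_neg, if_pos, if_true, if_false, not_false_eq_true] at hC9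
    linarith
  have hstruct : H 2 = H 1 ∧ H 3 = H 1 ∧ H 4 = H 1 ∧ H 5 = H 1 ∧ H 6 = H 1 ∧
      H 7 = H 1 ∧ H 8 = H 1 ∧ H 0 = -(3 * H 1) ∧ (H 9 = H 1 ∨ H 9 = H 1 + 1) := by
    omega
  obtain ⟨e2, e3, e4, e5, e6, e7, e8, e0, e9⟩ := hstruct
  have hS : ∀ t : ℤ, H 9 = H 1 + t →
      inter H H - inter H (Kc 9) = 2 * (-H 1 * t) + t - t * t := by
    intro t ht
    unfold inter Kc
    rw [sum10', sum10']
    simp only [show ¬((1:Fin 10) = 0) by decide, show ¬((2:Fin 10) = 0) by decide,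
      show ¬((3:Fin 10) = 0) by decide, show ¬((4:Fin 10) = 0) by decide,
      show ¬((5:Fin 10) = 0) by decide, show ¬((6:Fin 10) = 0) by decide,
      show ¬((7:Fin 10) = 0) by decide, show ¬((8:Fin 10) = 0) by decide,
      show ¬((9:Fin 10) = 0) by decide, if_neg, if_pos, if_true, if_false,
      not_false_eq_true]
    rw [e0, e2, e3, e4, e5, e6, e7, e8, ht]
    ring
  rcases e9 with e9 | e9
  · exfalso
    have h0 := hS 0 (by omega)
    unfold chi at hchi
    omega
  · refine ⟨-H 1, ?_, by omega, ?_, by omega⟩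
    · have h0 := hS 1 (by omega)
      unfold chi at hchi
      omega
    · intro i hi1 hi8
      have a := hmono 1 i (by decide) (by rw [Fin.le_def]; simpa using hi1)
      have b := hmono i 8 hi1 (by rw [Fin.le_def]; simpa using hi8)
      omega
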